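/- (Lemma C.1, sampling subsets with replacement.) Let e_1, …, e_n be i.i.d. square-integrable random vectors in ℝ^p with mean zero and covariance matrix Σ, and let C^{(j)} and C^{(k)} be independent random subsets of {1,…,n}, each uniformly distributed over the m-element subsets of {1,…,n} with 1 ≤ m < n, and independent of (e_1,…,e_n). Then Cov(√n·ω(C^{(j)}), √n·ω(C^{(k)})) = 0, while Var(√n·ω(C^{(j)})) = ((n−m)/m)·Σ; that is, the randomization variables of distinct machines are exactly uncorrelated when the subsets are drawn independently with replacement. -/

import Mathlib

open MeasureTheory ProbabilityTheory

/-- The covariance of two real-valued random variables. -/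
noncomputable def covar {Ω : Type*} [MeasurableSpace Ω] (P : Measure Ω) (X Y : Ω → ℝ) : ℝ :=
  ∫ ω, (X ω - ∫ ω', X ω' ∂P) * (Y ω - ∫ ω', Y ω' ∂P) ∂P

/-- The weight function: `auxf n m i C = √n * (1/n - 1_{i∈C}/m)`. -/
noncomputable def auxf (n m : ℕ) (i : Fin n) (C : Finset (Fin n)) : ℝ :=
  Real.sqrt n * (1 / (n : ℝ) - (if i ∈ C then (1 : ℝ) else 0) / (m : ℝ))

lemma auxf_repr (n m : ℕ) (C : Finset (Fin n)) (g : Fin n → ℝ) :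
    Real.sqrt n * ((1 / (n : ℝ)) * ∑ i, g i - (1 / (m : ℝ)) * ∑ i ∈ C, g i)
      = ∑ i, auxf n m i C * g i := by
  have hC : ∑ i ∈ C, g i = ∑ i, (if i ∈ C then (1 : ℝ) else 0) * g i := by
    simp [ite_mul]
  rw [hC]
  simp only [auxf, Finset.mul_sum, mul_sub]
  rw [← Finset.sum_sub_distrib]
  exact Finset.sum_congr rfl fun i _ => by split_ifs <;> ring

lemma auxf_norm_le (n m : ℕ) (i : Fin n) (C : Finset (Fin n)) :
    ‖auxf n m i C‖ ≤ Real.sqrt n * (1 / (n : ℝ) + 1 / (m : ℝ)) := by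
  have hn : (0:ℝ) ≤ ((n:ℝ))⁻¹ := by positivity
  have hm : (0:ℝ) ≤ ((m:ℝ))⁻¹ := by positivity
  rw [Real.norm_eq_abs, auxf, abs_mul, abs_of_nonneg (Real.sqrt_nonneg _)]
  refine mul_le_mul_of_nonneg_left ?_ (Real.sqrt_nonneg _)
  rw [abs_le]
  constructor <;> split_ifs <;> (norm_num; try linarith [hn, hm])

lemma aux_cardT (n m : ℕ) :
    (Finset.univ.filter (fun s : Finset (Fin n) => s.card = m)).card = n.choose m := by
  rw [← Finset.powerset_univ, ← Finset.powersetCard_eq_filter, Finset.card_powersetCard,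
    Finset.card_univ, Fintype.card_fin]

lemma aux_card (n m : ℕ) (hm1 : 1 ≤ m) (i : Fin n) :
    (Finset.univ.filter (fun s : Finset (Fin n) => s.card = m ∧ i ∈ s)).card
      = (n - 1).choose (m - 1) := by
  have h : ((Finset.univ.erase i).powersetCard (m - 1)).card = (n - 1).choose (m - 1) := by
    rw [Finset.card_powersetCard, Finset.card_erase_of_mem (Finset.mem_univ i),
      Finset.card_univ, Fintype.card_fin]
  rw [← h]
  refine Finset.card_bij' (fun s _ => s.erase i) (fun t _ => insert i t) ?hi ?hj ?left ?right
  case hi =>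
    intro s hs
    simp only [Finset.mem_filter, Finset.mem_univ, true_and] at hs
    rw [Finset.mem_powersetCard]
    exact ⟨Finset.erase_subset_erase i (Finset.subset_univ s),
      by rw [Finset.card_erase_of_mem hs.2, hs.1]⟩
  case hj =>
    intro t ht
    rw [Finset.mem_powersetCard] at ht
    have hit : i ∉ t := fun h' => (Finset.notMem_erase i Finset.univ) (ht.1 h')
    simp only [Finset.mem_filter, Finset.mem_univ, true_and]
    refine ⟨?_, Finset.mem_insert_self i t⟩
    rw [Finset.card_insert_of_notMem hit, ht.2]
    omega
  case left =>
    intro s hs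
    simp only [Finset.mem_filter, Finset.mem_univ, true_and] at hs
    exact Finset.insert_erase hs.2
  case right =>
    intro t ht
    rw [Finset.mem_powersetCard] at ht
    exact Finset.erase_insert (fun h' => (Finset.notMem_erase i Finset.univ) (ht.1 h'))

lemma aux_count_mul {n m : ℕ} (hm1 : 1 ≤ m) (hmn : m < n) (i : Fin n) :
    ((Finset.univ.filter (fun s : Finset (Fin n) => s.card = m ∧ i ∈ s)).card : ℝ) * n
      = m * ((Finset.univ.filter (fun s : Finset (Fin n) => s.card = m)).card : ℝ) := by
  have hn : 1 ≤ n := le_trans hm1 hmn.le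
  have h := Nat.add_one_mul_choose_eq (n - 1) (m - 1)
  rw [Nat.sub_add_cancel hn, Nat.sub_add_cancel hm1] at h
  have h2 : (n - 1).choose (m - 1) * n = m * n.choose m := by
    rw [mul_comm, h, mul_comm]
  rw [aux_card n m hm1 i, aux_cardT n m]
  exact_mod_cast h2

lemma auxf_sum_T {n m : ℕ} (hm1 : 1 ≤ m) (hmn : m < n) (i : Fin n) :
    ∑ s ∈ Finset.univ.filter (fun s : Finset (Fin n) => s.card = m), auxf n m i s = 0 := by
  have hn0 : (n:ℝ) ≠ 0 := Nat.cast_ne_zero.mpr (by omega)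
  have hm0 : (m:ℝ) ≠ 0 := Nat.cast_ne_zero.mpr (by omega)
  have hcnt := aux_count_mul hm1 hmn i
  simp only [auxf]
  rw [← Finset.mul_sum, Finset.sum_sub_distrib, Finset.sum_const, ← Finset.sum_div,
    Finset.sum_boole, Finset.filter_filter, nsmul_eq_mul]
  apply mul_eq_zero_of_right
  rw [sub_eq_zero, mul_one_div, div_eq_div_iff hn0 hm0]
  linear_combination -hcnt

lemma auxf_sq_sum_T {n m : ℕ} (hm1 : 1 ≤ m) (hmn : m < n) (i : Fin n) :
    ∑ s ∈ Finset.univ.filter (fun s : Finset (Fin n) => s.card = m),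
        auxf n m i s * auxf n m i s
      = (1/(m:ℝ) - 1/(n:ℝ))
          * ((Finset.univ.filter (fun s : Finset (Fin n) => s.card = m)).card : ℝ) := by
  have hn0 : (n:ℝ) ≠ 0 := Nat.cast_ne_zero.mpr (by omega)
  have hm0 : (m:ℝ) ≠ 0 := Nat.cast_ne_zero.mpr (by omega)
  have hs : Real.sqrt n * Real.sqrt n = n := Real.mul_self_sqrt (Nat.cast_nonneg n)
  have hsq : ∀ s : Finset (Fin n), auxf n m i s * auxf n m i s
      = (if i ∈ s then (n:ℝ) * (1/(n:ℝ) - 1/(m:ℝ))^2 else (n:ℝ) * (1/(n:ℝ))^2) := by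
    intro s; simp only [auxf]; split_ifs <;> (rw [mul_mul_mul_comm, hs]; ring)
  simp only [hsq]
  rw [Finset.sum_ite, Finset.sum_const, Finset.sum_const, Finset.filter_filter,
    Finset.filter_filter, nsmul_eq_mul, nsmul_eq_mul]
  have hcnt := aux_count_mul hm1 hmn i
  have hsum : ((Finset.univ.filter (fun s : Finset (Fin n) => s.card = m ∧ i ∈ s)).card : ℝ)
      + ((Finset.univ.filter (fun s : Finset (Fin n) => s.card = m ∧ ¬ i ∈ s)).card : ℝ)
      = ((Finset.univ.filter (fun s : Finset (Fin n) => s.card = m)).card : ℝ) := by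
    rw [← Finset.filter_filter, ← Finset.filter_filter]
    exact_mod_cast Finset.card_filter_add_card_filter_not
      (s := Finset.univ.filter (fun s : Finset (Fin n) => s.card = m)) (p := fun s => i ∈ s)
  set c := ((Finset.univ.filter (fun s : Finset (Fin n) => s.card = m ∧ i ∈ s)).card : ℝ) with hc
  set d := ((Finset.univ.filter (fun s : Finset (Fin n) => s.card = m ∧ ¬ i ∈ s)).card : ℝ) with hd
  set N := ((Finset.univ.filter (fun s : Finset (Fin n) => s.card = m)).card : ℝ) with hN
  field_simp
  linear_combination (m:ℝ)^2 * hsum + ((n:ℝ) - 2 * (m:ℝ)) * hcnt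

lemma integral_map_uniformOfFinset {Ω : Type*} [MeasurableSpace Ω] (P : Measure Ω)
    [IsProbabilityMeasure P] {α : Type*} [Fintype α] [MeasurableSpace α]
    [MeasurableSingletonClass α]
    (C : Ω → α) (hC : Measurable C) (T : Finset α) (hTne : T.Nonempty)
    (hlaw : P.map C = (PMF.uniformOfFinset T hTne).toMeasure) (g : α → ℝ) :
    ∫ ω, g (C ω) ∂P = (∑ s ∈ T, g s) / T.card := by
  classical
  have hg : Measurable g := measurable_of_countable g
  rw [← integral_map hC.aemeasurable hg.aestronglyMeasurable, hlaw]
  rw [integral_fintype (Integrable.of_finite)]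
  have hone : ∀ s : α, (PMF.uniformOfFinset T hTne).toMeasure.real {s}
      = if s ∈ T then ((T.card:ℝ))⁻¹ else 0 := by
    intro s
    rw [measureReal_def, PMF.toMeasure_apply_singleton _ _ (measurableSet_singleton s),
      PMF.uniformOfFinset_apply]
    split_ifs <;> simp
  simp only [hone, smul_eq_mul, ite_mul, zero_mul, Finset.sum_ite_mem, Finset.univ_inter]
  rw [← Finset.mul_sum, inv_mul_eq_div]

/-- Lemma C.1, sampling subsets with replacement: for i.i.d. mean-zero square-integrable
random vectors `e 1, …, e n` in `ℝ^p` with covariance matrix `Sig`, and independent random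
subsets `Cj`, `Ck`, each uniform over the `m`-element subsets of `{1,…,n}` and independent
of `(e 1, …, e n)`, the randomization variables `√n·ω(Cj)` and `√n·ω(Ck)` of distinct
machines are exactly uncorrelated: `Cov(√n·ω(Cj), √n·ω(Ck)) = 0`, while
`Var(√n·ω(Cj)) = ((n−m)/m)·Sig`, where `ω(C) = (1/n)·∑ᵢ eᵢ − (1/m)·∑_{i∈C} eᵢ`. -/
theorem sampling_with_replacement_uncorrelated
    {Ω : Type*} [MeasurableSpace Ω] (P : Measure Ω) [IsProbabilityMeasure P]
    (n p m : ℕ) (hm1 : 1 ≤ m) (hmn : m < n)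
    (e : Fin n → Ω → (Fin p → ℝ))
    (Sig : Matrix (Fin p) (Fin p) ℝ)
    (hmeas : ∀ i, Measurable (e i))
    (hindep : iIndepFun e P)
    (hident : ∀ i j, IdentDistrib (e i) (e j) P P)
    (hL2 : ∀ i a, MemLp (fun ω => e i ω a) 2 P)
    (hmean : ∀ i a, ∫ ω, e i ω a ∂P = 0)
    (hcov : ∀ i a b, covar P (fun ω => e i ω a) (fun ω => e i ω b) = Sig a b)
    [MeasurableSpace (Finset (Fin n))] [MeasurableSingletonClass (Finset (Fin n))]
    (Cj Ck : Ω → Finset (Fin n)) (hCj : Measurable Cj) (hCk : Measurable Ck)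
    (T : Finset (Finset (Fin n)))
    (hT : T = Finset.univ.filter (fun s : Finset (Fin n) => s.card = m))
    (hTne : T.Nonempty)
    (hlawCj : P.map Cj = (PMF.uniformOfFinset T hTne).toMeasure)
    (hlawCk : P.map Ck = (PMF.uniformOfFinset T hTne).toMeasure)
    (hindepCC : IndepFun Cj Ck P)
    (hindepCe : IndepFun (fun ω => (Cj ω, Ck ω)) (fun ω i => e i ω) P)
    (Wj Wk : Ω → Fin p → ℝ)
    (hWj : ∀ ω a, Wj ω a = Real.sqrt n *
      ((1 / (n : ℝ)) * ∑ i, e i ω a - (1 / (m : ℝ)) * ∑ i ∈ Cj ω, e i ω a))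
    (hWk : ∀ ω a, Wk ω a = Real.sqrt n *
      ((1 / (n : ℝ)) * ∑ i, e i ω a - (1 / (m : ℝ)) * ∑ i ∈ Ck ω, e i ω a)) :
    (∀ a b, covar P (fun ω => Wj ω a) (fun ω => Wk ω b) = 0) ∧
    (∀ a b, covar P (fun ω => Wj ω a) (fun ω => Wj ω b) =
      (((n : ℝ) - m) / m) * Sig a b) := by
  classical
  have hn0 : (n:ℝ) ≠ 0 := Nat.cast_ne_zero.mpr (by omega)
  have hm0 : (m:ℝ) ≠ 0 := Nat.cast_ne_zero.mpr (by omega)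
  have hmf : ∀ i : Fin n, Measurable (auxf n m i) := fun i => measurable_of_countable _
  have heam : ∀ (i : Fin n) (a : Fin p), Measurable (fun ω => e i ω a) :=
    fun i a => (measurable_pi_apply a).comp (hmeas i)
  have hK : ∀ (i : Fin n) (C : Finset (Fin n)),
      ‖auxf n m i C‖ ≤ Real.sqrt n * (1/(n:ℝ) + 1/(m:ℝ)) := fun i C => auxf_norm_le n m i C
  have hee : ∀ (i i' : Fin n) (a b : Fin p), Integrable (fun ω => e i ω a * e i' ω b) P := by
    intro i i' a b
    have h := (hL2 i a).integrable_mul (hL2 i' b)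
    exact h
  have hdiag : ∀ (i : Fin n) (a b : Fin p), ∫ ω, e i ω a * e i ω b ∂P = Sig a b := by
    intro i a b
    have h := hcov i a b
    simp only [covar, hmean, sub_zero] at h
    exact h
  have hoff : ∀ (i i' : Fin n), i ≠ i' → ∀ (a b : Fin p),
      ∫ ω, e i ω a * e i' ω b ∂P = 0 := by
    intro i i' hne a b
    have hI : IndepFun (fun ω => e i ω a) (fun ω => e i' ω b) P :=
      (hindep.indepFun hne).comp (measurable_pi_apply a) (measurable_pi_apply b)
    calc ∫ ω, e i ω a * e i' ω b ∂P
        = (∫ ω, e i ω a ∂P) * ∫ ω, e i' ω b ∂P :=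
          IndepFun.integral_mul_eq_mul_integral hI (heam i a).aestronglyMeasurable (heam i' b).aestronglyMeasurable
      _ = 0 := by rw [hmean, hmean, mul_zero]
  have hterm : ∀ (C D : Ω → Finset (Fin n)), Measurable C → Measurable D →
      ∀ (i i' : Fin n) (a b : Fin p),
      Integrable (fun ω => (auxf n m i (C ω) * auxf n m i' (D ω)) * (e i ω a * e i' ω b)) P := by
    intro C D hC hD i i' a b
    refine (hee i i' a b).bdd_mul
      (c := (Real.sqrt n * (1/(n:ℝ) + 1/(m:ℝ))) * (Real.sqrt n * (1/(n:ℝ) + 1/(m:ℝ))))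
      ((((hmf i).comp hC).mul ((hmf i').comp hD)).aestronglyMeasurable)
      (Filter.Eventually.of_forall fun ω => ?_)
    rw [norm_mul]
    exact mul_le_mul (hK i (C ω)) (hK i' (D ω)) (norm_nonneg _)
      (le_trans (norm_nonneg _) (hK i (C ω)))
  have key : ∀ (C D : Ω → Finset (Fin n)), Measurable C → Measurable D →
      IndepFun (fun ω => (C ω, D ω)) (fun ω i => e i ω) P → ∀ (a b : Fin p),
      ∫ ω, (∑ i, auxf n m i (C ω) * e i ω a) * (∑ i', auxf n m i' (D ω) * e i' ω b) ∂P
        = (∑ i : Fin n, ∫ ω, auxf n m i (C ω) * auxf n m i (D ω) ∂P) * Sig a b := by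
    intro C D hC hD hCD a b
    have hexp : ∀ ω : Ω, (∑ i, auxf n m i (C ω) * e i ω a) * (∑ i', auxf n m i' (D ω) * e i' ω b)
        = ∑ i : Fin n, ∑ i' : Fin n,
            (auxf n m i (C ω) * auxf n m i' (D ω)) * (e i ω a * e i' ω b) := by
      intro ω
      rw [Finset.sum_mul_sum]
      exact Finset.sum_congr rfl fun i _ => Finset.sum_congr rfl fun i' _ => by ring
    simp only [hexp]
    rw [integral_finset_sum _ (fun i _ =>
      integrable_finset_sum _ (fun i' _ => hterm C D hC hD i i' a b))]
    have hfac : ∀ i i' : Fin n,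
        ∫ ω, (auxf n m i (C ω) * auxf n m i' (D ω)) * (e i ω a * e i' ω b) ∂P
          = (∫ ω, auxf n m i (C ω) * auxf n m i' (D ω) ∂P) * ∫ ω, e i ω a * e i' ω b ∂P := by
      intro i i'
      have hgm : Measurable (fun pr : Finset (Fin n) × Finset (Fin n) =>
          auxf n m i pr.1 * auxf n m i' pr.2) :=
        ((hmf i).comp measurable_fst).mul ((hmf i').comp measurable_snd)
      have hhm : Measurable (fun v : Fin n → Fin p → ℝ => v i a * v i' b) :=
        by fun_prop
      have hI := hCD.comp hgm hhm
      exact IndepFun.integral_mul_eq_mul_integral hI ((hgm.comp (hC.prodMk hD)).aestronglyMeasurable)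
        ((hhm.comp (measurable_pi_lambda _ (fun i => hmeas i))).aestronglyMeasurable)
    have houter : ∀ i : Fin n,
        ∫ ω, ∑ i' : Fin n, (auxf n m i (C ω) * auxf n m i' (D ω)) * (e i ω a * e i' ω b) ∂P
          = (∫ ω, auxf n m i (C ω) * auxf n m i (D ω) ∂P) * Sig a b := by
      intro i
      rw [integral_finset_sum _ (fun i' _ => hterm C D hC hD i i' a b),
        Finset.sum_eq_single i]
      · rw [hfac i i, hdiag i a b]
      · intro i' _ hne
        rw [hfac i i', hoff i i' (fun h => hne h.symm) a b, mul_zero]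
      · intro h; exact absurd (Finset.mem_univ i) h
    rw [Finset.sum_congr rfl fun i _ => houter i, ← Finset.sum_mul]
  have mean0 : ∀ (C : Ω → Finset (Fin n)), Measurable C →
      IndepFun C (fun ω i => e i ω) P → ∀ a : Fin p,
      ∫ ω, ∑ i : Fin n, auxf n m i (C ω) * e i ω a ∂P = 0 := by
    intro C hC hCe a
    have hint : ∀ i : Fin n, Integrable (fun ω => auxf n m i (C ω) * e i ω a) P := by
      intro i
      refine ((hL2 i a).integrable one_le_two).bdd_mul
        (c := Real.sqrt n * (1/(n:ℝ) + 1/(m:ℝ)))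
        (((hmf i).comp hC).aestronglyMeasurable) ?_
      exact Filter.Eventually.of_forall fun ω => hK i (C ω)
    rw [integral_finset_sum _ (fun i _ => hint i)]
    apply Finset.sum_eq_zero
    intro i _
    have hI := hCe.comp (hmf i) ((measurable_pi_apply a).comp (measurable_pi_apply i))
    calc ∫ ω, auxf n m i (C ω) * e i ω a ∂P
        = (∫ ω, auxf n m i (C ω) ∂P) * ∫ ω, e i ω a ∂P :=
          IndepFun.integral_mul_eq_mul_integral hI (((hmf i).comp hC).aestronglyMeasurable)
            ((heam i a).aestronglyMeasurable)
      _ = 0 := by rw [hmean, mul_zero]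
  have hCjE : IndepFun Cj (fun ω i => e i ω) P := by
    have h := hindepCe.comp measurable_fst measurable_id
    exact h
  have hselfE : IndepFun (fun ω => (Cj ω, Cj ω)) (fun ω i => e i ω) P := by
    have h := hindepCe.comp (measurable_fst.prodMk measurable_fst) measurable_id
    exact h
  have hCkE : IndepFun Ck (fun ω i => e i ω) P := by
    have h := hindepCe.comp measurable_snd measurable_id
    exact h
  have hint0 : ∀ (C : Ω → Finset (Fin n)), Measurable C →
      P.map C = (PMF.uniformOfFinset T hTne).toMeasure → ∀ i : Fin n,
      ∫ ω, auxf n m i (C ω) ∂P = 0 := by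
    intro C hC hlaw i
    rw [integral_map_uniformOfFinset P C hC T hTne hlaw (auxf n m i), hT,
      auxf_sum_T hm1 hmn i, zero_div]
  constructor
  · intro a b
    simp only [covar, hWj, hWk, auxf_repr]
    rw [mean0 Cj hCj hCjE a, mean0 Ck hCk hCkE b]
    simp only [sub_zero]
    rw [key Cj Ck hCj hCk hindepCe a b]
    have hz : ∀ i : Fin n, ∫ ω, auxf n m i (Cj ω) * auxf n m i (Ck ω) ∂P = 0 := by
      intro i
      have hI := hindepCC.comp (hmf i) (hmf i)
      calc ∫ ω, auxf n m i (Cj ω) * auxf n m i (Ck ω) ∂P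
          = (∫ ω, auxf n m i (Cj ω) ∂P) * ∫ ω, auxf n m i (Ck ω) ∂P :=
            IndepFun.integral_mul_eq_mul_integral hI (((hmf i).comp hCj).aestronglyMeasurable)
              (((hmf i).comp hCk).aestronglyMeasurable)
        _ = 0 := by rw [hint0 Cj hCj hlawCj i, zero_mul]
    rw [Finset.sum_eq_zero (fun i _ => hz i), zero_mul]
  · intro a b
    simp only [covar, hWj, auxf_repr]
    rw [mean0 Cj hCj hCjE a, mean0 Cj hCj hCjE b]
    simp only [sub_zero]
    rw [key Cj Cj hCj hCj hselfE a b]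
    have hTcard : ((Finset.univ.filter (fun s : Finset (Fin n) => s.card = m)).card : ℝ) ≠ 0 := by
      have : (Finset.univ.filter (fun s : Finset (Fin n) => s.card = m)).Nonempty := hT ▸ hTne
      exact Nat.cast_ne_zero.mpr (Finset.card_pos.mpr this).ne'
    have hv : ∀ i : Fin n, ∫ ω, auxf n m i (Cj ω) * auxf n m i (Cj ω) ∂P
        = 1/(m:ℝ) - 1/(n:ℝ) := by
      intro i
      rw [integral_map_uniformOfFinset P Cj hCj T hTne hlawCj
        (fun s => auxf n m i s * auxf n m i s), hT, auxf_sq_sum_T hm1 hmn i,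
        mul_div_assoc, div_self hTcard, mul_one]
    rw [Finset.sum_congr rfl fun i _ => hv i, Finset.sum_const, nsmul_eq_mul,
      Finset.card_univ, Fintype.card_fin]
    congr 1
    field_simp
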